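/- arXiv:2503.23675 — 3 statements merged into one kernel-verified Lean document; each statement's English description precedes it below -/
import Mathlib

section
/- Let x_0, ..., x_k ∈ B_r(x_0) ⊂ ℝ^m be α-linearly independent at scale r, i.e., x_{i+1} ∉ B_{αr}(x_0 + span{x_1-x_0, ..., x_i-x_0}) for each i. Then for every q in the affine subspace x_0 + span{x_1-x_0, ..., x_k-x_0}, there exist unique real numbers q_1, ..., q_k with q = x_0 + Σ_i q_i(x_i - x_0) and |q_i| ≤ C(m,α)·|q - x_0|/r for all i. -/
open Set Metric Finset

theorem key_lemma (m k : ℕ) (α : ℝ) (hα : 0 < α) :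
    ∃ ε : ℝ, 0 < ε ∧ ∀ v : Fin k → EuclideanSpace ℝ (Fin m),
      (∀ i, ‖v i‖ ≤ 1) →
      (∀ i : Fin k, ∀ c : Fin k → ℝ,
        α ≤ ‖v i - ∑ j ∈ Finset.univ.filter (fun j : Fin k => j.val < i.val), c j • v j‖) →
      ∀ a : Fin k → ℝ, ε * ‖a‖ ≤ ‖∑ j, a j • v j‖ := by
  classical
  set E := EuclideanSpace ℝ (Fin m)
  set K : Set (Fin k → E) := {v | (∀ i, ‖v i‖ ≤ 1) ∧
    ∀ i : Fin k, ∀ c : Fin k → ℝ,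
      α ≤ ‖v i - ∑ j ∈ Finset.univ.filter (fun j : Fin k => j.val < i.val), c j • v j‖}
    with hKdef
  -- positivity of the norm of combinations on K
  have hpos : ∀ v ∈ K, ∀ a : Fin k → ℝ, a ≠ 0 → ¬ (∑ j, a j • v j = 0) := by
    intro v hv a ha hsum
    obtain ⟨i₀, hi₀⟩ := Function.ne_iff.mp ha
    have hi₀' : a i₀ ≠ 0 := by simpa using hi₀
    set t : Finset (Fin k) := Finset.univ.filter (fun j => a j ≠ 0) with ht
    have htne : t.Nonempty := ⟨i₀, by simp [ht, hi₀']⟩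
    set i := t.max' htne with hi
    have hai : a i ≠ 0 := by
      have := t.max'_mem htne
      simp only [ht, Finset.mem_filter] at this
      exact this.2
    have hgt : ∀ j, i < j → a j = 0 := by
      intro j hj
      by_contra h
      exact absurd (t.le_max' j (by simp [ht, h])) (not_le.mpr hj)
    set filt := Finset.univ.filter (fun j : Fin k => j.val < i.val) with hfilt
    have hsplit : (∑ j, a j • v j)
        = (∑ j ∈ filt, a j • v j) + a i • v i := by
      rw [← Finset.sum_filter_add_sum_filter_not Finset.univ (fun j : Fin k => j.val < i.val)]
      congr 1
      refine Finset.sum_eq_single_of_mem i (by simp) ?_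
      intro j hj hji
      have hjge : ¬ (j.val < i.val) := by simpa using (Finset.mem_filter.mp hj).2
      have : i < j := by
        rcases lt_trichotomy i j with h | h | h
        · exact h
        · exact absurd h.symm hji
        · exact absurd (Fin.lt_def.mp h) hjge
      rw [hgt j this, zero_smul]
    have h1 : ∑ j ∈ filt, a j • v j = -(a i • v i) := by
      have h := hsplit.symm.trans hsum
      exact eq_neg_of_add_eq_zero_left h
    have h2 : v i - ∑ j ∈ filt, (-(a j / a i)) • v j = 0 := by
      have h3 : ∑ j ∈ filt, (-(a j / a i)) • v j = (-(a i)⁻¹) • ∑ j ∈ filt, a j • v j := by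
        rw [Finset.smul_sum]
        refine Finset.sum_congr rfl fun j _ => ?_
        rw [smul_smul]
        congr 1
        field_simp
      rw [h3, h1, smul_neg, neg_smul, neg_neg, smul_smul, inv_mul_cancel₀ hai, one_smul,
        sub_self]
    have := hv.2 i (fun j => -(a j / a i))
    rw [h2, norm_zero] at this
    linarith
  set S : Set ((Fin k → E) × (Fin k → ℝ)) := K ×ˢ sphere 0 1 with hSdef
  by_cases hS : S.Nonempty
  · -- K closed and bounded hence compact
    have hKclosed : IsClosed K := by
      have : K = (⋂ i : Fin k, {v : Fin k → E | ‖v i‖ ≤ 1}) ∩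
          (⋂ i : Fin k, ⋂ c : Fin k → ℝ, {v : Fin k → E |
            α ≤ ‖v i - ∑ j ∈ Finset.univ.filter (fun j : Fin k => j.val < i.val), c j • v j‖}) := by
        ext v; simp [hKdef, forall_and]
      rw [this]
      refine IsClosed.inter (isClosed_iInter fun i => ?_) (isClosed_iInter fun i =>
        isClosed_iInter fun c => ?_)
      · exact isClosed_le (by fun_prop) continuous_const
      · refine isClosed_le continuous_const ?_
        have hcont : Continuous fun v : Fin k → E =>
            v i - ∑ j ∈ Finset.univ.filter (fun j : Fin k => j.val < i.val), c j • v j := by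
          refine (continuous_apply i).sub ?_
          exact continuous_finset_sum _ fun j _ => by fun_prop
        exact hcont.norm
    have hKsub : K ⊆ closedBall 0 1 := by
      intro v hv
      rw [mem_closedBall, dist_zero_right]
      exact (pi_norm_le_iff_of_nonneg zero_le_one).mpr fun i => by simpa using hv.1 i
    have hKcompact : IsCompact K :=
      (isCompact_closedBall (0 : Fin k → E) 1).of_isClosed_subset hKclosed hKsub
    have hScompact : IsCompact S := hKcompact.prod (isCompact_sphere 0 1)
    have hfc : Continuous fun va : (Fin k → E) × (Fin k → ℝ) => ‖∑ j, va.2 j • va.1 j‖ := by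
      refine Continuous.norm ?_
      exact continuous_finset_sum _ fun j _ =>
        ((continuous_apply j).comp continuous_snd).smul ((continuous_apply j).comp continuous_fst)
    obtain ⟨⟨v₀, a₀⟩, hmem, hmin'⟩ := hScompact.exists_isMinOn hS hfc.continuousOn
    have hmin : ∀ y ∈ S, ‖∑ j, a₀ j • v₀ j‖ ≤ ‖∑ j, y.2 j • y.1 j‖ := fun y hy => hmin' hy
    set ε := ‖∑ j, a₀ j • v₀ j‖ with hε
    have hv₀K : v₀ ∈ K := hmem.1
    have ha₀ : ‖a₀‖ = 1 := mem_sphere_zero_iff_norm.mp hmem.2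
    have hεpos : 0 < ε := by
      rcases (norm_nonneg (∑ j, a₀ j • v₀ j)).lt_or_eq with h | h
      · exact h
      · exfalso
        have : ∑ j, a₀ j • v₀ j = 0 := by
          rw [← norm_eq_zero]; exact h.symm ▸ rfl
        exact hpos v₀ hv₀K a₀ (by intro h0; rw [h0] at ha₀; simp at ha₀) this
    refine ⟨ε, hεpos, fun v hv1 hv2 a => ?_⟩
    have hvK : v ∈ K := ⟨hv1, hv2⟩
    by_cases ha : a = 0
    · simp [ha]
    · have hna : (0:ℝ) < ‖a‖ := norm_pos_iff.mpr ha
      set c : Fin k → ℝ := ‖a‖⁻¹ • a with hc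
      have hcn : ‖c‖ = 1 := by
        rw [hc, norm_smul, norm_inv, norm_norm, inv_mul_cancel₀ hna.ne']
      have hcm : (v, c) ∈ S := ⟨hvK, mem_sphere_zero_iff_norm.mpr hcn⟩
      have := hmin (v, c) hcm
      have hsum : ∑ j, c j • v j = ‖a‖⁻¹ • ∑ j, a j • v j := by
        rw [Finset.smul_sum]
        exact Finset.sum_congr rfl fun j _ => by rw [hc, Pi.smul_apply, smul_smul]; rfl
      rw [hsum, norm_smul, norm_inv, norm_norm] at this
      calc ε * ‖a‖ ≤ (‖a‖⁻¹ * ‖∑ j, a j • v j‖) * ‖a‖ := by nlinarith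
        _ = ‖∑ j, a j • v j‖ := by field_simp
  · refine ⟨1, one_pos, fun v hv1 hv2 a => ?_⟩
    by_cases ha : a = 0
    · simp [ha]
    · exfalso
      apply hS
      have hna : (0:ℝ) < ‖a‖ := norm_pos_iff.mpr ha
      refine ⟨(v, ‖a‖⁻¹ • a), ⟨⟨hv1, hv2⟩, ?_⟩⟩
      simp only [mem_sphere_iff_norm, sub_zero]
      rw [norm_smul, norm_inv, norm_norm, inv_mul_cancel₀ hna.ne']

/-- Effective coordinates with respect to α-linearly independent points:
every point of the spanned affine subspace has unique coefficients bounded by `C(m,α)|q-x₀|/r`. -/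
theorem stmt_2 (m k : ℕ) (α : ℝ) (hα : 0 < α) :
    ∃ C : ℝ, 0 < C ∧
      ∀ (r : ℝ) (x : Fin (k + 1) → EuclideanSpace ℝ (Fin m)), 0 < r →
        (∀ i, x i ∈ ball (x 0) r) →
        (∀ i : Fin k, ∀ p : EuclideanSpace ℝ (Fin m),
            p - x 0 ∈ Submodule.span ℝ
              ((fun j : Fin k => x j.succ - x 0) '' {j | (j : ℕ) < (i : ℕ)}) →
            α * r ≤ dist (x i.succ) p) →
        ∀ q : EuclideanSpace ℝ (Fin m),
          q - x 0 ∈ Submodule.span ℝ (Set.range (fun j : Fin k => x j.succ - x 0)) →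
          (∃! a : Fin k → ℝ, q = x 0 + ∑ j, a j • (x j.succ - x 0)) ∧
          ∀ a : Fin k → ℝ, q = x 0 + ∑ j, a j • (x j.succ - x 0) →
            ∀ j, |a j| ≤ C * ‖q - x 0‖ / r := by
  classical
  obtain ⟨ε, hε, hkey⟩ := key_lemma m k α hα
  refine ⟨ε⁻¹, inv_pos.mpr hε, ?_⟩
  intro r x hr hball hsep q hq
  set w : Fin k → EuclideanSpace ℝ (Fin m) := fun j => x j.succ - x 0 with hw
  set v : Fin k → EuclideanSpace ℝ (Fin m) := fun j => r⁻¹ • w j with hv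
  have hwv : ∀ j, w j = r • v j := fun j => by
    rw [hv]; rw [smul_smul, mul_inv_cancel₀ hr.ne', one_smul]
  have hv1 : ∀ i, ‖v i‖ ≤ 1 := by
    intro i
    have hb := hball i.succ
    rw [mem_ball, dist_eq_norm] at hb
    have : ‖v i‖ = r⁻¹ * ‖w i‖ := by
      rw [hv, norm_smul, norm_inv, Real.norm_eq_abs, abs_of_pos hr]
    rw [this, inv_mul_le_iff₀ hr, mul_one]
    exact hb.le
  have hv2 : ∀ i : Fin k, ∀ c : Fin k → ℝ,
      α ≤ ‖v i - ∑ j ∈ Finset.univ.filter (fun j : Fin k => j.val < i.val), c j • v j‖ := by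
    intro i c
    set filt := Finset.univ.filter (fun j : Fin k => j.val < i.val) with hfilt
    set p : EuclideanSpace ℝ (Fin m) := x 0 + ∑ j ∈ filt, c j • w j with hp
    have hpmem : p - x 0 ∈ Submodule.span ℝ (w '' {j | (j : ℕ) < (i : ℕ)}) := by
      have hps : p - x 0 = ∑ j ∈ filt, c j • w j := by rw [hp]; abel
      rw [hps]
      refine Submodule.sum_mem _ fun j hj => Submodule.smul_mem _ _ (Submodule.subset_span ?_)
      exact ⟨j, (Finset.mem_filter.mp hj).2, rfl⟩
    have h := hsep i p hpmem
    rw [dist_eq_norm] at h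
    have hdec : x i.succ - p = r • (v i - ∑ j ∈ filt, c j • v j) := by
      have e1 : r • (v i - ∑ j ∈ filt, c j • v j) = w i - ∑ j ∈ filt, c j • w j := by
        rw [smul_sub, Finset.smul_sum, ← hwv]
        congr 1
        exact Finset.sum_congr rfl fun j _ => by rw [smul_comm, ← hwv]
      rw [e1, hp]
      simp only [hw]
      abel
    rw [hdec, norm_smul, Real.norm_eq_abs, abs_of_pos hr] at h
    exact le_of_mul_le_mul_left (by linarith [h]) hr
  have hkeyv := hkey v hv1 hv2
  have hnorm : ∀ a : Fin k → ℝ, q = x 0 + ∑ j, a j • w j →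
      ε * ‖a‖ ≤ r⁻¹ * ‖q - x 0‖ := by
    intro a ha
    have hsv : ∑ j, a j • v j = r⁻¹ • (q - x 0) := by
      have : q - x 0 = ∑ j, a j • w j := by rw [ha]; abel
      rw [this, Finset.smul_sum]
      exact Finset.sum_congr rfl fun j _ => by rw [hv, smul_comm]
    have := hkeyv a
    rw [hsv, norm_smul, norm_inv, Real.norm_eq_abs, abs_of_pos hr] at this
    exact this
  constructor
  · obtain ⟨b, hb⟩ := (Submodule.mem_span_range_iff_exists_fun ℝ).mp hq
    refine ⟨b, ?_, ?_⟩
    · show q = x 0 + ∑ j, b j • w j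
      rw [hb]; abel
    intro a ha
    have hb' : q = x 0 + ∑ j, b j • w j := by rw [hb]; abel
    have hzero : ∑ j, (a j - b j) • w j = 0 := by
      have : ∑ j, (a j - b j) • w j = (∑ j, a j • w j) - ∑ j, b j • w j := by
        rw [← Finset.sum_sub_distrib]
        exact Finset.sum_congr rfl fun j _ => sub_smul _ _ _
      rw [this]
      have h1 : ∑ j, a j • w j = q - x 0 := by rw [ha]; abel
      have h2 : ∑ j, b j • w j = q - x 0 := by rw [hb']; abel
      rw [h1, h2, sub_self]
    have hzv : ∑ j, (a j - b j) • v j = 0 := by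
      have : ∑ j, (a j - b j) • v j = r⁻¹ • ∑ j, (a j - b j) • w j := by
        rw [Finset.smul_sum]
        exact Finset.sum_congr rfl fun j _ => by rw [hv, smul_comm]
      rw [this, hzero, smul_zero]
    have := hkeyv (a - b)
    have hab : ∑ j, (a - b) j • v j = 0 := by simpa using hzv
    rw [hab, norm_zero] at this
    have : ‖a - b‖ ≤ 0 := by
      by_contra hcon
      push_neg at hcon
      nlinarith
    have : a - b = 0 := by
      rw [← norm_eq_zero]
      exact le_antisymm this (norm_nonneg _)
    exact sub_eq_zero.mp this
  · intro a ha j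
    have h := hnorm a ha
    have hj : |a j| ≤ ‖a‖ := by
      have := norm_le_pi_norm a j
      simpa [Real.norm_eq_abs] using this
    have h2 : ‖a‖ ≤ ε⁻¹ * ‖q - x 0‖ / r := by
      rw [div_eq_mul_inv]
      calc ‖a‖ = ε⁻¹ * (ε * ‖a‖) := by field_simp
        _ ≤ ε⁻¹ * (r⁻¹ * ‖q - x 0‖) :=
          mul_le_mul_of_nonneg_left h (by positivity)
        _ = ε⁻¹ * ‖q - x 0‖ * r⁻¹ := by ring
    linarith
end

section
/- Let Q be a symmetric positive semidefinite bilinear form on ℝ^m with eigenvalues λ_1 ≥ λ_2 ≥ ... ≥ λ_m and corresponding orthonormal eigenvectors e_1, ..., e_m. Suppose λ_2 > λ_3. Set 𝓛 = span{e_3, ..., e_m} and define for any (m-2)-dimensional subspace L the quantity S(L) = (1/2)Σ_{i} Q[v_i, v_i] over an orthonormal basis {v_i} of L. Then for any (m-2)-subspace L: S(L) ≥ S(𝓛) + (1/2)(λ_2 - λ_3)·c(m)·d_Gr(L, 𝓛)², where d_Gr is the Grassmannian distance and c(m) > 0 depends only on m. -/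
open Set

section Aux

open Finset RealInnerProductSpace

variable {m n : ℕ}

private lemma aux_mem_orthogonal_span {S : Set (EuclideanSpace ℝ (Fin m))}
    {x : EuclideanSpace ℝ (Fin m)} (h : ∀ y ∈ S, ⟪x, y⟫ = 0) :
    x ∈ (Submodule.span ℝ S)ᗮ := by
  rw [Submodule.mem_orthogonal']
  intro u hu
  have hle : Submodule.span ℝ S ≤ LinearMap.ker (innerSL ℝ x : EuclideanSpace ℝ (Fin m) →ₗ[ℝ] ℝ) := by
    rw [Submodule.span_le]
    intro y hy
    simpa using h y hy
  simpa using hle hu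

private lemma aux_parseval (e : OrthonormalBasis (Fin m) ℝ (EuclideanSpace ℝ (Fin m)))
    (x : EuclideanSpace ℝ (Fin m)) : ∑ j, (⟪e j, x⟫) ^ 2 = ‖x‖ ^ 2 := by
  have h := e.orthonormal.inner_sum (fun j => ⟪e j, x⟫) (fun j => ⟪e j, x⟫) Finset.univ
  rw [e.sum_repr'] at h
  rw [← real_inner_self_eq_norm_sq, h]
  simp [sq]

private lemma aux_norm_sum {b : Fin n → EuclideanSpace ℝ (Fin m)} (hb : Orthonormal ℝ b)
    (c : Fin n → ℝ) : ‖∑ i, c i • b i‖ ^ 2 = ∑ i, (c i) ^ 2 := by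
  have h := hb.inner_sum c c Finset.univ
  rw [← real_inner_self_eq_norm_sq, h]
  simp [sq]

private lemma aux_proj {L : Submodule ℝ (EuclideanSpace ℝ (Fin m))}
    {b : Fin n → EuclideanSpace ℝ (Fin m)} (hb : Orthonormal ℝ b)
    (hspan : Submodule.span ℝ (Set.range b) = L) [Submodule.HasOrthogonalProjection L]
    (x : EuclideanSpace ℝ (Fin m)) :
    (Submodule.orthogonalProjection L x : EuclideanSpace ℝ (Fin m)) = ∑ i, ⟪b i, x⟫ • b i := by
  apply Submodule.eq_starProjection_of_mem_orthogonal
  · rw [← hspan]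
    exact Submodule.sum_mem _ fun i _ =>
      Submodule.smul_mem _ _ (Submodule.subset_span ⟨i, rfl⟩)
  · rw [← hspan]
    apply aux_mem_orthogonal_span
    rintro y ⟨i, rfl⟩
    rw [inner_sub_left, hb.inner_left_fintype]
    simp only [conj_trivial]
    rw [real_inner_comm x (b i), sub_self]

private lemma aux_opnorm (e : OrthonormalBasis (Fin m) ℝ (EuclideanSpace ℝ (Fin m)))
    (T : EuclideanSpace ℝ (Fin m) →L[ℝ] EuclideanSpace ℝ (Fin m)) :
    ‖T‖ ^ 2 ≤ ∑ j, ‖T (e j)‖ ^ 2 := by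
  have hF : 0 ≤ ∑ j, ‖T (e j)‖ ^ 2 := Finset.sum_nonneg fun _ _ => sq_nonneg _
  have hb : ‖T‖ ≤ Real.sqrt (∑ j, ‖T (e j)‖ ^ 2) := by
    apply T.opNorm_le_bound (Real.sqrt_nonneg _)
    intro x
    have h1 : T x = ∑ j, ⟪e j, x⟫ • T (e j) := by
      conv_lhs => rw [← e.sum_repr' x]
      rw [map_sum]
      simp
    rw [h1]
    have hcs := Finset.sum_mul_sq_le_sq_mul_sq Finset.univ (fun j => |⟪e j, x⟫|)
      (fun j => ‖T (e j)‖)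
    have h2 : ‖∑ j, ⟪e j, x⟫ • T (e j)‖ ≤ ∑ j, |⟪e j, x⟫| * ‖T (e j)‖ := by
      refine (norm_sum_le _ _).trans_eq ?_
      simp [norm_smul]
    have h3 : ∑ j, |⟪e j, x⟫| * ‖T (e j)‖
        ≤ Real.sqrt ((∑ j, (⟪e j, x⟫) ^ 2) * ∑ j, ‖T (e j)‖ ^ 2) := by
      have hnn : 0 ≤ ∑ j, |⟪e j, x⟫| * ‖T (e j)‖ :=
        Finset.sum_nonneg fun _ _ => mul_nonneg (abs_nonneg _) (norm_nonneg _)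
      have : (∑ j, |⟪e j, x⟫| * ‖T (e j)‖) ^ 2
          ≤ (∑ j, (⟪e j, x⟫) ^ 2) * ∑ j, ‖T (e j)‖ ^ 2 := by
        simpa [sq_abs] using hcs
      calc ∑ j, |⟪e j, x⟫| * ‖T (e j)‖
          = Real.sqrt ((∑ j, |⟪e j, x⟫| * ‖T (e j)‖) ^ 2) := (Real.sqrt_sq hnn).symm
        _ ≤ _ := Real.sqrt_le_sqrt this
    have h4 : Real.sqrt ((∑ j, (⟪e j, x⟫) ^ 2) * ∑ j, ‖T (e j)‖ ^ 2)
        = Real.sqrt (∑ j, ‖T (e j)‖ ^ 2) * ‖x‖ := by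
      rw [Real.sqrt_mul (Finset.sum_nonneg fun _ _ => sq_nonneg _), aux_parseval,
        Real.sqrt_sq (norm_nonneg _), mul_comm]
    linarith
  calc ‖T‖ ^ 2 ≤ (Real.sqrt (∑ j, ‖T (e j)‖ ^ 2)) ^ 2 :=
        pow_le_pow_left₀ (norm_nonneg _) hb 2
    _ = _ := Real.sq_sqrt hF

private lemma aux_split (hm : 3 ≤ m) (f : Fin m → ℝ) :
    ∑ j : Fin m, f j
      = f ⟨0, by omega⟩ + f ⟨1, lt_of_lt_of_le (by norm_num) hm⟩ + ∑ j : Fin m, (if 2 ≤ (j : ℕ) then f j else 0) := by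
  classical
  have h1 : ∑ j : Fin m, f j
      = ∑ j : Fin m, ((if 2 ≤ (j : ℕ) then f j else 0) + (if 2 ≤ (j : ℕ) then 0 else f j)) := by
    refine Finset.sum_congr rfl fun j _ => ?_
    split <;> ring
  have h2 : ∑ j : Fin m, (if 2 ≤ (j : ℕ) then (0:ℝ) else f j) = f ⟨0, by omega⟩ + f ⟨1, lt_of_lt_of_le (by norm_num) hm⟩ := by
    have hrw : ∀ j : Fin m, (if 2 ≤ (j : ℕ) then (0:ℝ) else f j)
        = (if ¬ 2 ≤ (j : ℕ) then f j else 0) := by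
      intro j; split <;> simp_all
    rw [Finset.sum_congr rfl fun j _ => hrw j, ← Finset.sum_filter]
    have hset : Finset.univ.filter (fun j : Fin m => ¬ 2 ≤ (j : ℕ))
        = {(⟨0, by omega⟩ : Fin m), ⟨1, lt_of_lt_of_le (by norm_num) hm⟩} := by
      ext j
      simp [Fin.ext_iff]
      omega
    rw [hset, Finset.sum_pair (by simp [Fin.ext_iff])]
  rw [h1, Finset.sum_add_distrib, h2]
  ring

end Aux

set_option maxHeartbeats 2000000 in
open Finset RealInnerProductSpace in
/-- Quantitative uniqueness of the best `(m-2)`-plane for a PSD bilinear form with an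
eigenvalue gap `λ₂ > λ₃`:
`S(L) ≥ S(𝓛) + ½(λ₂-λ₃)·c(m)·‖Π_L - Π_𝓛‖²` for every `(m-2)`-subspace `L`. -/
theorem stmt_6 (m : ℕ) (hm : 3 ≤ m) :
    ∃ c : ℝ, 0 < c ∧
      ∀ (Q : EuclideanSpace ℝ (Fin m) →ₗ[ℝ] EuclideanSpace ℝ (Fin m) →ₗ[ℝ] ℝ)
        (e : OrthonormalBasis (Fin m) ℝ (EuclideanSpace ℝ (Fin m))) (lam : Fin m → ℝ),
        (∀ v w, Q v w = Q w v) → (∀ v, 0 ≤ Q v v) →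
        Antitone lam →
        (∀ i j, Q (e i) (e j) = if i = j then lam i else 0) →
        lam ⟨2, by omega⟩ < lam ⟨1, by omega⟩ →
        ∀ (L : Submodule ℝ (EuclideanSpace ℝ (Fin m)))
          (b : Fin (m - 2) → EuclideanSpace ℝ (Fin m)),
          Module.finrank ℝ L = m - 2 →
          Orthonormal ℝ b → Submodule.span ℝ (Set.range b) = L →
          (1 / 2) * ∑ i, Q (b i) (b i)
            ≥ (1 / 2) * (∑ i : Fin m, if 2 ≤ (i : ℕ) then lam i else 0)
              + (1 / 2) * (lam ⟨1, by omega⟩ - lam ⟨2, by omega⟩) * c *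
                ‖(L.subtypeL.comp (Submodule.orthogonalProjection L))
                  - ((Submodule.span ℝ (e '' {i : Fin m | 2 ≤ (i : ℕ)})).subtypeL.comp
                      (Submodule.orthogonalProjection (Submodule.span ℝ (e '' {i : Fin m | 2 ≤ (i : ℕ)}))))‖ ^ 2 := by
  refine ⟨1/2, by norm_num, ?_⟩
  intro Q e lam hsymm hpsd hanti hdiag hgap L b hdim hb hspan
  classical
  set j0 : Fin m := ⟨0, by omega⟩ with hj0
  set j1 : Fin m := ⟨1, by omega⟩ with hj1
  set j2 : Fin m := ⟨2, by omega⟩ with hj2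
  set 𝓛 : Submodule ℝ (EuclideanSpace ℝ (Fin m)) :=
    Submodule.span ℝ (e '' {i : Fin m | 2 ≤ (i : ℕ)}) with h𝓛
  set t : Fin m → ℝ := fun j => ∑ i, (⟪e j, b i⟫) ^ 2 with ht
  -- Step A: trace formula
  have hdouble : ∀ x y : EuclideanSpace ℝ (Fin m),
      Q x y = ∑ j, ⟪e j, x⟫ * ∑ k, ⟪e k, y⟫ * Q (e j) (e k) := by
    intro x y
    calc Q x y = ∑ j, ⟪e j, x⟫ * Q (e j) y := by
          conv_lhs => rw [← e.sum_repr' x]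
          rw [map_sum Q _ Finset.univ, LinearMap.sum_apply]
          exact Finset.sum_congr rfl fun j _ => by
            rw [map_smul, LinearMap.smul_apply, smul_eq_mul]
      _ = ∑ j, ⟪e j, x⟫ * ∑ k, ⟪e k, y⟫ * Q (e j) (e k) := by
          refine Finset.sum_congr rfl fun j _ => ?_
          congr 1
          conv_lhs => rw [← e.sum_repr' y]
          rw [map_sum]
          exact Finset.sum_congr rfl fun k _ => by rw [map_smul, smul_eq_mul]
  have hQi : ∀ i, Q (b i) (b i) = ∑ j, lam j * (⟪e j, b i⟫) ^ 2 := by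
    intro i
    rw [hdouble]
    refine Finset.sum_congr rfl fun j _ => ?_
    rw [Finset.sum_eq_single j]
    · rw [hdiag, if_pos rfl]
      ring
    · intro k _ hk
      rw [hdiag]
      simp [Ne.symm hk]
    · simp
  have hA : ∑ i, Q (b i) (b i) = ∑ j, lam j * t j := by
    rw [Finset.sum_congr rfl fun i _ => hQi i, Finset.sum_comm]
    exact Finset.sum_congr rfl fun j _ => by rw [ht]; simp [Finset.mul_sum]
  -- Step B: constraints on t
  have ht0 : ∀ j, 0 ≤ t j := fun j => Finset.sum_nonneg fun _ _ => sq_nonneg _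
  have ht1 : ∀ j, t j ≤ 1 := by
    intro j
    have h := hb.sum_inner_products_le (e j) (s := Finset.univ)
    have he1 : ‖e j‖ = 1 := e.orthonormal.1 j
    calc t j = ∑ i, ‖⟪b i, e j⟫‖ ^ 2 := by
          refine Finset.sum_congr rfl fun i _ => ?_
          rw [Real.norm_eq_abs, sq_abs, real_inner_comm]
      _ ≤ ‖e j‖ ^ 2 := h
      _ = 1 := by rw [he1]; norm_num
  have htsum : ∑ j, t j = (m : ℝ) - 2 := by
    rw [Finset.sum_comm]
    have : ∀ i, ∑ j, (⟪e j, b i⟫) ^ 2 = 1 := by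
      intro i
      rw [aux_parseval, hb.1 i]
      norm_num
    rw [Finset.sum_congr rfl fun i _ => this i, Finset.sum_const]
    simp only [Finset.card_univ, Fintype.card_fin, nsmul_eq_mul, mul_one]
    have : (2 : ℕ) ≤ m := by omega
    push_cast [Nat.cast_sub this]
    ring
  -- counting
  have hones : ∑ j : Fin m, (if 2 ≤ (j : ℕ) then (1:ℝ) else 0) = (m : ℝ) - 2 := by
    have := aux_split hm (fun _ => (1:ℝ))
    simp only [Finset.sum_const, Finset.card_univ, Fintype.card_fin, nsmul_eq_mul, mul_one] at this
    linarith
  have hone : ∑ j : Fin m, (if 2 ≤ (j : ℕ) then 1 - t j else 0) = t j0 + t j1 := by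
    have hsplit := aux_split hm t
    have hsub : ∑ j : Fin m, (if 2 ≤ (j : ℕ) then 1 - t j else 0)
        = (∑ j : Fin m, (if 2 ≤ (j : ℕ) then (1:ℝ) else 0))
          - ∑ j : Fin m, (if 2 ≤ (j : ℕ) then t j else 0) := by
      rw [← Finset.sum_sub_distrib]
      refine Finset.sum_congr rfl fun j _ => ?_
      split <;> ring
    rw [hsub, hones]
    linarith [htsum, hsplit]
  -- Step D: gap estimate
  have hkey : ∑ i, Q (b i) (b i) - (∑ i : Fin m, if 2 ≤ (i : ℕ) then lam i else 0)
      ≥ (lam j1 - lam j2) * (t j0 + t j1) := by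
    have hsplitQ := aux_split hm (fun j => lam j * t j)
    have hbound : ∑ j : Fin m, (if 2 ≤ (j : ℕ) then lam j * (1 - t j) else 0)
        ≤ lam j2 * (t j0 + t j1) := by
      have hterm : ∀ j : Fin m, (if 2 ≤ (j : ℕ) then lam j * (1 - t j) else 0)
          ≤ (if 2 ≤ (j : ℕ) then lam j2 * (1 - t j) else 0) := by
        intro j
        split
        · next hj =>
            have hle : lam j ≤ lam j2 := hanti (by simpa [hj2, Fin.le_def] using hj)
            exact mul_le_mul_of_nonneg_right hle (by linarith [ht1 j])
        · exact le_refl 0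
      calc ∑ j : Fin m, (if 2 ≤ (j : ℕ) then lam j * (1 - t j) else 0)
          ≤ ∑ j : Fin m, (if 2 ≤ (j : ℕ) then lam j2 * (1 - t j) else 0) :=
            Finset.sum_le_sum fun j _ => hterm j
        _ = lam j2 * ∑ j : Fin m, (if 2 ≤ (j : ℕ) then 1 - t j else 0) := by
            rw [Finset.mul_sum]
            refine Finset.sum_congr rfl fun j _ => ?_
            split <;> ring
        _ = lam j2 * (t j0 + t j1) := by rw [hone]
    have hsub2 : ∑ j : Fin m, (if 2 ≤ (j : ℕ) then lam j else 0)
        - ∑ j : Fin m, (if 2 ≤ (j : ℕ) then lam j * t j else 0)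
        = ∑ j : Fin m, (if 2 ≤ (j : ℕ) then lam j * (1 - t j) else 0) := by
      rw [← Finset.sum_sub_distrib]
      refine Finset.sum_congr rfl fun j _ => ?_
      split <;> ring
    have hlow : lam j1 * t j0 ≤ lam j0 * t j0 :=
      mul_le_mul_of_nonneg_right (hanti (by simp [hj0, hj1, Fin.le_def])) (ht0 j0)
    rw [hA]
    rw [hsplitQ]
    simp only [ge_iff_le]
    nlinarith [hbound, hsub2, hlow]
  -- Step E: operator norm estimate
  set T : EuclideanSpace ℝ (Fin m) →L[ℝ] EuclideanSpace ℝ (Fin m) :=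
    (L.subtypeL.comp (Submodule.orthogonalProjection L)) - (𝓛.subtypeL.comp (Submodule.orthogonalProjection 𝓛)) with hT
  have hprojL : ∀ x, (Submodule.orthogonalProjection L x : EuclideanSpace ℝ (Fin m))
      = ∑ i, ⟪b i, x⟫ • b i := fun x => aux_proj hb hspan x
  have hnormL : ∀ j, ‖(Submodule.orthogonalProjection L (e j) : EuclideanSpace ℝ (Fin m))‖ ^ 2 = t j := by
    intro j
    rw [hprojL, aux_norm_sum hb]
    exact Finset.sum_congr rfl fun i _ => by rw [real_inner_comm]
  have hTj : ∀ j : Fin m, ‖T (e j)‖ ^ 2 = if 2 ≤ (j : ℕ) then 1 - t j else t j := by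
    intro j
    by_cases hj : 2 ≤ (j : ℕ)
    · have hmem : e j ∈ 𝓛 := Submodule.subset_span ⟨j, hj, rfl⟩
      have hproj𝓛 : (Submodule.orthogonalProjection 𝓛 (e j) : EuclideanSpace ℝ (Fin m)) = e j :=
        Submodule.starProjection_eq_self_iff.mpr hmem
      have hTe : T (e j) = (Submodule.orthogonalProjection L (e j) : EuclideanSpace ℝ (Fin m)) - e j := by
        simp only [hT, ContinuousLinearMap.sub_apply, ContinuousLinearMap.comp_apply,
          Submodule.subtypeL_apply, hproj𝓛]
      have hperp : ⟪e j - (Submodule.orthogonalProjection L (e j) : EuclideanSpace ℝ (Fin m)),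
          (Submodule.orthogonalProjection L (e j) : EuclideanSpace ℝ (Fin m))⟫ = 0 :=
        Submodule.starProjection_inner_eq_zero (K := L) (e j)
        (Submodule.orthogonalProjection L (e j) : EuclideanSpace ℝ (Fin m)) (Submodule.orthogonalProjection L (e j)).2
      rw [inner_sub_left] at hperp
      have he1 : ‖e j‖ = 1 := e.orthonormal.1 j
      rw [hTe, if_pos hj]
      have hps := hnormL j
      have h1 : ⟪(Submodule.orthogonalProjection L (e j) : EuclideanSpace ℝ (Fin m)), e j⟫ = t j := by
        have := real_inner_self_eq_norm_sq
          ((Submodule.orthogonalProjection L (e j) : EuclideanSpace ℝ (Fin m)))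
        rw [real_inner_comm]
        linarith [hperp, this, hps]
      rw [norm_sub_sq_real, h1, hps, he1]
      ring
    · have hmem : e j ∈ 𝓛ᗮ := by
        apply aux_mem_orthogonal_span
        rintro y ⟨i, hi, rfl⟩
        exact e.orthonormal.2 (fun h : j = i => hj (by rw [h]; exact hi))
      have hproj𝓛 : (Submodule.orthogonalProjection 𝓛 (e j) : EuclideanSpace ℝ (Fin m)) = 0 := by
        rw [Submodule.orthogonalProjectionOnto_eq_zero_iff.mpr hmem]
        rfl
      have hTe : T (e j) = (Submodule.orthogonalProjection L (e j) : EuclideanSpace ℝ (Fin m)) := by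
        simp only [hT, ContinuousLinearMap.sub_apply, ContinuousLinearMap.comp_apply,
          Submodule.subtypeL_apply, hproj𝓛, sub_zero]
      rw [hTe, if_neg hj, hnormL j]
  have hF : ∑ j, ‖T (e j)‖ ^ 2 = 2 * (t j0 + t j1) := by
    rw [Finset.sum_congr rfl fun j _ => hTj j]
    have hsplit := aux_split hm (fun j => if 2 ≤ (j : ℕ) then 1 - t j else t j)
    have hdiag0 : ∀ (j : Fin m), (j : ℕ) < 2 →
        (if 2 ≤ (j : ℕ) then 1 - t j else t j) = t j := fun j hj => if_neg (by omega)
    have hinner : ∑ j : Fin m, (if 2 ≤ (j : ℕ) then (if 2 ≤ (j : ℕ) then 1 - t j else t j) else 0)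
        = ∑ j : Fin m, (if 2 ≤ (j : ℕ) then 1 - t j else 0) := by
      refine Finset.sum_congr rfl fun j _ => ?_
      by_cases h : 2 ≤ (j : ℕ)
      · rw [if_pos h, if_pos h, if_pos h]
      · rw [if_neg h, if_neg h]
    rw [hsplit, hinner, hone, hdiag0 j0 (by rw [hj0]; exact Nat.zero_lt_two), hdiag0 j1 (by rw [hj1]; exact Nat.one_lt_two)]
    ring
  have hTnorm : ‖T‖ ^ 2 ≤ 2 * (t j0 + t j1) := by
    calc ‖T‖ ^ 2 ≤ ∑ j, ‖T (e j)‖ ^ 2 := aux_opnorm e T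
      _ = _ := hF
  -- conclusion
  have hgap' : (0:ℝ) < lam j1 - lam j2 := by
    simp only [hj1, hj2]
    linarith [hgap]
  have hD0 : (0:ℝ) ≤ ‖T‖ ^ 2 := sq_nonneg _
  have hfinal := mul_le_mul_of_nonneg_left hTnorm hgap'.le
  rw [ge_iff_le]
  nlinarith [hkey, hfinal, hD0]
end

section
/- Let ν be an (m-2)-rectifiable Radon measure on B_1 ⊂ ℝ^m of the form ν = θ(x)H^{m-2}⌞Σ with θ ≥ ε_0 > 0 on Σ, and suppose ν is invariant under translations by an (m-1)-dimensional subspace L (that is, ν(A + l) = ν(A) for all l ∈ L with A + l ⊂ B_1). If ν is locally finite, then ν = 0 on B_1. -/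
open Set Metric MeasureTheory ENNReal

/-- A locally finite measure of the form `θ·H^{m-2}⌞S` on `B₁ ⊂ ℝ^m` with `θ ≥ ε₀ > 0` on `S`
which is invariant under translations by an `(m-1)`-dimensional subspace vanishes on `B₁`. -/
theorem stmt_17 (m : ℕ) (ε₀ : ℝ) (hε₀ : 0 < ε₀)
    (S : Set (EuclideanSpace ℝ (Fin m))) (hSmeas : MeasurableSet S)
    (hSsub : S ⊆ ball (0 : EuclideanSpace ℝ (Fin m)) 1)
    (θ : EuclideanSpace ℝ (Fin m) → ℝ≥0∞) (hθmeas : Measurable θ)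
    (hθ : ∀ x ∈ S, ENNReal.ofReal ε₀ ≤ θ x)
    (μ : Measure (EuclideanSpace ℝ (Fin m)))
    (hμ : μ = ((μH[((m : ℝ) - 2)]).restrict S).withDensity θ)
    (hfin : IsLocallyFiniteMeasure μ)
    (L : Submodule ℝ (EuclideanSpace ℝ (Fin m)))
    (hL : Module.finrank ℝ L = m - 1)
    (hinv : ∀ l ∈ L, ∀ A : Set (EuclideanSpace ℝ (Fin m)),
      MeasurableSet A → A ⊆ ball (0 : EuclideanSpace ℝ (Fin m)) 1 →
      (fun x => x + l) '' A ⊆ ball (0 : EuclideanSpace ℝ (Fin m)) 1 →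
      μ ((fun x => x + l) '' A) = μ A) :
    μ (ball (0 : EuclideanSpace ℝ (Fin m)) 1) = 0 := by
  classical
  by_contra hne
  have hε₀' : ENNReal.ofReal ε₀ ≠ 0 := by
    simp [ENNReal.ofReal_eq_zero, not_le, hε₀]
  -- basic formula for μ
  have hμE : ∀ E : Set (EuclideanSpace ℝ (Fin m)), MeasurableSet E →
      μ E = ∫⁻ x in E ∩ S, θ x ∂(μH[((m : ℝ) - 2)]) := by
    intro E hE
    rw [hμ, withDensity_apply _ hE, Measure.restrict_restrict hE]
  -- lower bound via θ ≥ ε₀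
  have hlow : ∀ E : Set (EuclideanSpace ℝ (Fin m)), MeasurableSet E → E ⊆ S →
      ENNReal.ofReal ε₀ * μH[((m : ℝ) - 2)] E ≤ μ E := by
    intro E hE hES
    rw [hμE E hE, inter_eq_self_of_subset_left hES]
    calc ENNReal.ofReal ε₀ * μH[((m : ℝ) - 2)] E
        = ∫⁻ _ in E, ENNReal.ofReal ε₀ ∂(μH[((m : ℝ) - 2)]) := (setLIntegral_const _ _).symm
      _ ≤ ∫⁻ x in E, θ x ∂(μH[((m : ℝ) - 2)]) :=
          setLIntegral_mono hθmeas fun x hx => hθ x (hES hx)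
  rcases lt_or_ge m 2 with hm | hm
  · -- degenerate case : negative dimension
    have hd : ((m : ℝ) - 2) < 0 := by
      have : (m : ℝ) < 2 := by exact_mod_cast hm
      linarith
    have hSne : (ball (0 : EuclideanSpace ℝ (Fin m)) 1 ∩ S).Nonempty := by
      rcases eq_empty_or_nonempty (ball (0 : EuclideanSpace ℝ (Fin m)) 1 ∩ S) with h | h
      · exact absurd (by rw [hμE _ measurableSet_ball, h]; simp) hne
      · exact h
    obtain ⟨x, -, hxS⟩ := hSne
    have hsing : μH[((m : ℝ) - 2)] ({x} : Set (EuclideanSpace ℝ (Fin m))) = ∞ := by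
      rcases Measure.hausdorffMeasure_zero_or_top hd ({x} : Set (EuclideanSpace ℝ (Fin m)))
        with h | h
      · rw [Measure.hausdorffMeasure_zero_singleton] at h
        exact absurd h one_ne_zero
      · exact h
    have h1 : (⊤ : ℝ≥0∞) ≤ μ {x} := by
      have := hlow {x} (measurableSet_singleton x) (by simpa using hxS)
      rwa [hsing, ENNReal.mul_top hε₀'] at this
    have h2 : μ {x} < ⊤ := isCompact_singleton.measure_lt_top
    exact absurd (top_le_iff.1 h1) h2.ne
  · -- main case
    set n := m - 1 with hn_def
    have hn : (n : ℝ) = (m : ℝ) - 1 := by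
      rw [hn_def, Nat.cast_sub (by omega)]; norm_num
    have hm' : (2 : ℝ) ≤ (m : ℝ) := by exact_mod_cast hm
    -- an isometric parametrization of L
    have hcard : Module.finrank ℝ L = n := hL
    let b : OrthonormalBasis (Fin n) ℝ L :=
      (stdOrthonormalBasis ℝ L).reindex (finCongr hcard)
    let f : EuclideanSpace ℝ (Fin n) →ₗᵢ[ℝ] EuclideanSpace ℝ (Fin m) :=
      L.subtypeₗᵢ.comp b.repr.symm.toLinearIsometry
    have hfL : ∀ l, f l ∈ L := fun l => (b.repr.symm l).2
    -- find a good radius q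
    obtain ⟨q, hq0, hq1, hq⟩ : ∃ q : ℝ, 0 < q ∧ q < 1 ∧
        μ (closedBall (0 : EuclideanSpace ℝ (Fin m)) q) ≠ 0 := by
      by_contra h
      push_neg at h
      apply hne
      have hsub : ball (0 : EuclideanSpace ℝ (Fin m)) 1 ⊆
          ⋃ k : ℕ, closedBall (0 : EuclideanSpace ℝ (Fin m)) (1 - 1 / (k + 2)) := by
        intro x hx
        rw [mem_ball_zero_iff] at hx
        obtain ⟨k, hk⟩ := exists_nat_one_div_lt (by linarith : (0 : ℝ) < 1 - ‖x‖)
        refine mem_iUnion.2 ⟨k, ?_⟩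
        rw [mem_closedBall_zero_iff]
        have h1 : (1 : ℝ) / (k + 2) ≤ 1 / (k + 1) := by
          apply one_div_le_one_div_of_le
          · positivity
          · linarith
        linarith
      refine measure_mono_null hsub (measure_iUnion_null fun k => ?_)
      have hk2 : (0 : ℝ) < 1 / (k + 2) := by positivity
      have hk3 : (1 : ℝ) / (k + 2) < 1 := by
        rw [div_lt_one (by positivity)]
        have : (0 : ℝ) ≤ k := Nat.cast_nonneg k
        linarith
      exact h _ (by linarith) (by linarith)
    set A := S ∩ closedBall (0 : EuclideanSpace ℝ (Fin m)) q with hA_def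
    have hAm : MeasurableSet A := hSmeas.inter measurableSet_closedBall
    have hAS : A ⊆ S := inter_subset_left
    have hAq : μ A = μ (closedBall (0 : EuclideanSpace ℝ (Fin m)) q) := by
      have hsets : A ∩ S = closedBall (0 : EuclideanSpace ℝ (Fin m)) q ∩ S := by
        ext y
        simp only [hA_def, mem_inter_iff]
        tauto
      rw [hμE _ hAm, hμE _ measurableSet_closedBall, hsets]
    have hμA0 : μ A ≠ 0 := by rw [hAq]; exact hq
    have hAfin : μ A ≠ ⊤ := by
      refine ne_top_of_le_ne_top ?_ (measure_mono (inter_subset_right : A ⊆ _))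
      exact (isCompact_closedBall _ _).measure_lt_top.ne
    have hAsub1 : A ⊆ ball (0 : EuclideanSpace ℝ (Fin m)) 1 := fun y hy => by
      rw [mem_ball_zero_iff]
      have := mem_closedBall_zero_iff.1 hy.2
      linarith
    set δ : ℝ := (1 - q) / 2 with hδ_def
    have hδ : 0 < δ := by rw [hδ_def]; linarith
    set D := ball (0 : EuclideanSpace ℝ (Fin n)) δ with hD_def
    -- translation invariance
    have htr : ∀ l ∈ D, μ ((fun x => x + f l) '' A) = μ A := by
      intro l hl
      refine hinv (f l) (hfL l) A hAm hAsub1 ?_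
      rintro y ⟨a, ha, rfl⟩
      rw [mem_ball_zero_iff]
      have h1 : ‖a‖ ≤ q := mem_closedBall_zero_iff.1 ha.2
      have h2 : ‖f l‖ < δ := by
        rw [f.norm_map]
        exact mem_ball_zero_iff.1 hl
      calc ‖a + f l‖ ≤ ‖a‖ + ‖f l‖ := norm_add_le _ _
        _ < q + δ := by linarith
        _ < 1 := by rw [hδ_def]; linarith
    have himg : ∀ l : EuclideanSpace ℝ (Fin m),
        (fun x => x + l) '' A = (fun x => x - l) ⁻¹' A := by
      intro l
      ext y
      simp only [mem_image, mem_preimage]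
      constructor
      · rintro ⟨a, ha, rfl⟩
        simpa using ha
      · intro h
        exact ⟨y - l, h, by abel⟩
    -- Fubini
    set F : EuclideanSpace ℝ (Fin n) → EuclideanSpace ℝ (Fin m) → ℝ≥0∞ :=
      fun l x => A.indicator (fun _ => 1) (x - f l) with hF_def
    have hsubmeas : Measurable fun p : EuclideanSpace ℝ (Fin n) × EuclideanSpace ℝ (Fin m) =>
        p.2 - f p.1 :=
      measurable_snd.sub (f.continuous.measurable.comp measurable_fst)
    have hFmeas : Measurable (Function.uncurry F) :=
      (measurable_const.indicator hAm).comp hsubmeas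
    have step1 : ∫⁻ l in D, μ A ∂volume = μ A * volume D := setLIntegral_const _ _
    have step2 : ∫⁻ l in D, μ A ∂volume = ∫⁻ l in D, ∫⁻ x, F l x ∂μ ∂volume := by
      refine setLIntegral_congr_fun measurableSet_ball (fun l hl => ?_)
      have hpre : MeasurableSet ((fun x => x - f l) ⁻¹' A) :=
        (measurable_id.sub measurable_const) hAm
      have heq : ∀ x, F l x =
          ((fun x => x - f l) ⁻¹' A).indicator (fun _ => (1 : ℝ≥0∞)) x := by
        intro x
        by_cases h : x - f l ∈ A <;> simp [hF_def, indicator, h]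
      calc μ A = μ ((fun x => x + f l) '' A) := (htr l hl).symm
        _ = μ ((fun x => x - f l) ⁻¹' A) := by rw [himg]
        _ = ∫⁻ x, ((fun x => x - f l) ⁻¹' A).indicator (fun _ => (1 : ℝ≥0∞)) x ∂μ := by
            rw [lintegral_indicator hpre]
            simp
        _ = ∫⁻ x, F l x ∂μ := by simp_rw [heq]
    haveI : SigmaFinite μ := MeasureTheory.sigmaFinite_of_locallyFinite
    have step3 : ∫⁻ l in D, ∫⁻ x, F l x ∂μ ∂volume = ∫⁻ x, ∫⁻ l in D, F l x ∂volume ∂μ :=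
      lintegral_lintegral_swap (hFmeas.aemeasurable)
    have step4 : ∀ x, ∫⁻ l in D, F l x ∂volume
        = volume ((fun l => x - f l) ⁻¹' A ∩ D) := by
      intro x
      have hφm : Measurable fun l : EuclideanSpace ℝ (Fin n) => x - f l :=
        (continuous_const.sub f.continuous).measurable
      have hpre : MeasurableSet ((fun l => x - f l) ⁻¹' A) := hφm hAm
      have heq : ∀ l, F l x =
          ((fun l => x - f l) ⁻¹' A).indicator (fun _ => (1 : ℝ≥0∞)) l := by
        intro l
        by_cases h : x - f l ∈ A <;> simp [hF_def, indicator, h]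
      calc ∫⁻ l in D, F l x ∂volume
          = ∫⁻ l in D, ((fun l => x - f l) ⁻¹' A).indicator (fun _ => (1 : ℝ≥0∞)) l ∂volume := by
            simp_rw [heq]
        _ = (volume.restrict D) ((fun l => x - f l) ⁻¹' A) := by
            rw [lintegral_indicator hpre]
            simp
        _ = volume ((fun l => x - f l) ⁻¹' A ∩ D) := by
            rw [Measure.restrict_apply hpre]
    have hne2 : ∫⁻ x, volume ((fun l => x - f l) ⁻¹' A ∩ D) ∂μ ≠ 0 := by
      rw [← funext step4, ← step3, ← step2, step1]
      exact mul_ne_zero hμA0 (measure_ball_pos volume _ hδ).ne'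
    obtain ⟨x, hGx⟩ : ∃ x, volume ((fun l => x - f l) ⁻¹' A ∩ D) ≠ 0 := by
      by_contra hall
      push_neg at hall
      apply hne2
      simp [hall]
    set φ : EuclideanSpace ℝ (Fin n) → EuclideanSpace ℝ (Fin m) := fun l => x - f l with hφ_def
    set G := φ ⁻¹' A ∩ D with hG_def
    have hφm : Measurable φ := (continuous_const.sub f.continuous).measurable
    have hGmeas : MeasurableSet G := (hφm hAm).inter measurableSet_ball
    have hφiso : Isometry φ := by
      refine Isometry.of_dist_eq fun a c => ?_
      have h1 : φ a - φ c = f (c - a) := by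
        rw [hφ_def]
        simp only [map_sub]
        abel
      rw [dist_eq_norm, dist_eq_norm, h1, f.norm_map, norm_sub_rev]
    have hd1 : (0 : ℝ) ≤ (m : ℝ) - 1 := by linarith
    have hHG : μH[((m : ℝ) - 1)] (φ '' G) = μH[((m : ℝ) - 1)] G :=
      hφiso.hausdorffMeasure_image (Or.inl hd1) G
    -- volume G ≤ Hausdorff measure of G
    have hvol_le : volume G ≤ μH[((m : ℝ) - 1)] G := by
      set e := (MeasurableEquiv.toLp 2 (Fin n → ℝ)).symm with he_def
      have h1 : volume G = volume (⇑e '' G) := by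
        rw [MeasurableEquiv.image_eq_preimage_symm]
        exact (((EuclideanSpace.volume_preserving_symm_measurableEquiv_toLp (Fin n)).symm
          ((MeasurableEquiv.toLp 2 (Fin n → ℝ)).symm)).measure_preimage
          hGmeas.nullMeasurableSet).symm
      have h2 : (volume : Measure (Fin n → ℝ)) (⇑e '' G) = μH[(n : ℝ)] (⇑e '' G) := by
        rw [← hausdorffMeasure_pi_real (ι := Fin n)]
        norm_num
      have hlip : LipschitzWith 1 ⇑e := by
        rw [he_def]
        exact PiLp.lipschitzWith_ofLp 2 _
      have h3 : μH[(n : ℝ)] (⇑e '' G) ≤ μH[(n : ℝ)] G := by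
        have := (hlip.lipschitzOnWith (s := G)).hausdorffMeasure_image_le
          (d := (n : ℝ)) (by positivity)
        simpa using this
      calc volume G = μH[(n : ℝ)] (⇑e '' G) := by rw [h1, h2]
        _ ≤ μH[(n : ℝ)] G := h3
        _ = μH[((m : ℝ) - 1)] G := by rw [hn]
    have hT0 : μH[((m : ℝ) - 1)] (φ '' G) ≠ 0 := by
      rw [hHG]
      exact fun h => hGx (le_antisymm (h ▸ hvol_le) zero_le)
    have htop : μH[((m : ℝ) - 2)] (φ '' G) = ⊤ :=
      (Measure.hausdorffMeasure_zero_or_top (by linarith : (m : ℝ) - 2 < (m : ℝ) - 1)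
        (φ '' G)).resolve_left hT0
    have hTA : φ '' G ⊆ A := by
      rintro y ⟨l, hl, rfl⟩
      exact hl.1
    have hHA : μH[((m : ℝ) - 2)] A = ⊤ :=
      top_le_iff.1 (htop ▸ measure_mono hTA)
    have : (⊤ : ℝ≥0∞) ≤ μ A := by
      have := hlow A hAm hAS
      rwa [hHA, ENNReal.mul_top hε₀'] at this
    exact hAfin (top_le_iff.1 this)
end
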